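/- arXiv:1603.08134 — 7 statements merged into one kernel-verified Lean document; each statement's English description precedes it below -/
import Mathlib

section
/- Let X be a compact topological space and F ⊆ C(X) a uniformly bounded family of continuous real-valued functions. Then F contains an independent sequence if and only if F contains a strongly independent sequence (i.e., for continuous functions on a compact space, independence with respect to finite disjoint index sets is equivalent to independence with respect to infinite disjoint index sets). -/
open Filter Topology

/-- A sequence of real functions is independent: for some `s < r`, all finite
disjoint index sets can be separated. -/
def IndepSeq {X : Type*} (f : ℕ → X → ℝ) : Prop :=
  ∃ s r : ℝ, s < r ∧ ∀ P M : Finset ℕ, Disjoint P M →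
    ∃ x : X, (∀ n ∈ P, f n x < s) ∧ (∀ n ∈ M, r < f n x)

/-- A sequence of real functions is strongly independent: for some `s < r`, all
infinite disjoint index sets can be separated. -/
def StrongIndepSeq {X : Type*} (f : ℕ → X → ℝ) : Prop :=
  ∃ s r : ℝ, s < r ∧ ∀ P M : Set ℕ, P.Infinite → M.Infinite → Disjoint P M →
    ∃ x : X, (∀ n ∈ P, f n x < s) ∧ (∀ n ∈ M, r < f n x)

/-- For a uniformly bounded family of continuous functions on a compact space,
containing an independent sequence is equivalent to containing a strongly
independent sequence. -/
theorem indep_iff_strongIndep_of_compact {X : Type*} [TopologicalSpace X]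
    [CompactSpace X] (F : Set (X → ℝ)) (C : ℝ)
    (hcont : ∀ f ∈ F, Continuous f)
    (hbd : ∀ f ∈ F, ∀ x, |f x| ≤ C) :
    (∃ g : ℕ → X → ℝ, (∀ n, g n ∈ F) ∧ IndepSeq g) ↔
    (∃ g : ℕ → X → ℝ, (∀ n, g n ∈ F) ∧ StrongIndepSeq g) := by
  classical
  constructor
  · rintro ⟨g, hgF, s, r, hsr, hsep⟩
    refine ⟨g, hgF, (2*s+r)/3, (s+2*r)/3, by linarith, ?_⟩
    intro P M hP hM hPM
    -- closed sets
    set Z : ℕ → Set X := fun n =>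
      if n ∈ P then {x | g n x ≤ s} else if n ∈ M then {x | r ≤ g n x} else Set.univ with hZ
    have hZc : ∀ n, IsClosed (Z n) := by
      intro n
      by_cases h1 : n ∈ P
      · simpa [hZ, h1] using isClosed_le (hcont _ (hgF n)) continuous_const
      · by_cases h2 : n ∈ M
        · simpa [hZ, h1, h2] using isClosed_le continuous_const (hcont _ (hgF n))
        · simp [hZ, h1, h2]
    have hne : (⋂ n, Z n).Nonempty := by
      by_contra h
      rw [Set.not_nonempty_iff_eq_empty] at h
      have h' : (Set.univ : Set X) ∩ ⋂ n, Z n = ∅ := by simp [h]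
      obtain ⟨t, ht⟩ := CompactSpace.isCompact_univ.elim_finite_subfamily_closed Z hZc h'
      set Pt : Finset ℕ := t.filter (· ∈ P) with hPt
      set Mt : Finset ℕ := t.filter (· ∈ M) with hMt
      have hdisj : Disjoint Pt Mt := by
        rw [Finset.disjoint_left]
        intro a haP haM
        rw [hPt, Finset.mem_filter] at haP
        rw [hMt, Finset.mem_filter] at haM
        exact hPM.le_bot ⟨haP.2, haM.2⟩ |>.elim
      obtain ⟨x, hx1, hx2⟩ := hsep Pt Mt hdisj
      have hxZ : x ∈ ⋂ n ∈ t, Z n := by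
        refine Set.mem_iInter₂.2 fun n hn => ?_
        by_cases h1 : n ∈ P
        · have := hx1 n (by rw [hPt]; exact Finset.mem_filter.2 ⟨hn, h1⟩)
          simp [hZ, h1]; linarith
        · by_cases h2 : n ∈ M
          · have := hx2 n (by rw [hMt]; exact Finset.mem_filter.2 ⟨hn, h2⟩)
            simp [hZ, h1, h2]; linarith
          · simp [hZ, h1, h2]
      have : x ∈ (Set.univ : Set X) ∩ ⋂ n ∈ t, Z n := ⟨trivial, hxZ⟩
      rw [ht] at this
      exact this
    obtain ⟨x, hx⟩ := hne
    rw [Set.mem_iInter] at hx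
    refine ⟨x, fun n hn => ?_, fun n hn => ?_⟩
    · have := hx n
      simp only [hZ, if_pos hn, Set.mem_setOf_eq] at this
      linarith
    · have hnP : n ∉ P := fun h => hPM.le_bot ⟨h, hn⟩ |>.elim
      have := hx n
      simp only [hZ, if_neg hnP, if_pos hn, Set.mem_setOf_eq] at this
      linarith
  · rintro ⟨g, hgF, s, r, hsr, hsep⟩
    refine ⟨g, hgF, s, r, hsr, ?_⟩
    intro P M hPM
    set N : ℕ := (P ∪ M).sup id + 1 with hN
    have hmemlt : ∀ n ∈ P ∪ M, n < N := by
      intro n hn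
      exact Nat.lt_succ_of_le (Finset.le_sup (f := id) hn)
    set P' : Set ℕ := ↑P ∪ {n | N ≤ n ∧ Even n} with hP'
    set M' : Set ℕ := ↑M ∪ {n | N ≤ n ∧ ¬ Even n} with hM'
    have hPinf : P'.Infinite := by
      refine Set.Infinite.mono (Set.subset_union_right) ?_
      have : Set.InjOn (fun k => 2 * (k + N)) Set.univ := by
        intro a _ b _ h; simpa using h
      have := Set.infinite_univ (α := ℕ) |>.image this
      refine this.mono ?_
      rintro x ⟨k, -, rfl⟩
      exact ⟨by show N ≤ 2 * (k + N); omega, ⟨k + N, by ring⟩⟩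
    have hMinf : M'.Infinite := by
      refine Set.Infinite.mono (Set.subset_union_right) ?_
      have : Set.InjOn (fun k => 2 * (k + N) + 1) Set.univ := by
        intro a _ b _ h; simpa using h
      have := Set.infinite_univ (α := ℕ) |>.image this
      refine this.mono ?_
      rintro x ⟨k, -, rfl⟩
      refine ⟨by show N ≤ 2 * (k + N) + 1; omega, ?_⟩
      show ¬ Even (2 * (k + N) + 1)
      simp [Nat.even_add_one, parity_simps]
    have hdisj : Disjoint P' M' := by
      rw [Set.disjoint_left]
      rintro a (haP | haP) (haM | haM)
      · exact (Finset.disjoint_left.1 hPM haP haM).elim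
      · have h1 := hmemlt a (Finset.mem_union_left _ haP)
        have h2 := haM.1
        omega
      · have h1 := hmemlt a (Finset.mem_union_right _ haM)
        have h2 := haP.1
        omega
      · exact haM.2 haP.2
    obtain ⟨x, hx1, hx2⟩ := hsep P' M' hPinf hMinf hdisj
    exact ⟨x, fun n hn => hx1 n (Or.inl hn), fun n hn => hx2 n (Or.inl hn)⟩
end

section
/- If a sequence (f_n) of real-valued functions on a set X contains no independent subsequence with constants s < r for any rationals s < r, and every countable intersection obstruction is witnessed finitely, then under compactness of X and continuity of the f_n, every sequence in the family has a pointwise convergent subsequence (Rosenthal's lemma, one direction): a uniformly bounded family F ⊆ C(X) on a compact space X with no independent subsequence has the property that each sequence in F has a subsequence converging pointwise on X. -/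
open Filter Topology

section Comb
variable {X : Type*} (A B : ℕ → Set X)

def RGood (S : Set X) (M : Set ℕ) : Prop :=
  ∀ x ∈ S, {n ∈ M | x ∈ A n}.Finite ∨ {n ∈ M | x ∈ B n}.Finite

def RBad (S : Set X) (M : Set ℕ) : Prop :=
  ∀ M' ⊆ M, M'.Infinite → ∃ x ∈ S,
    {n ∈ M' | x ∈ A n}.Infinite ∧ {n ∈ M' | x ∈ B n}.Infinite

variable {A B}

lemma RBad.mono_set {S S' : Set X} {M : Set ℕ} (h : RBad A B S M) (hS : S ⊆ S') :
    RBad A B S' M := fun M' hM' hi => by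
  obtain ⟨x, hx, h1, h2⟩ := h M' hM' hi
  exact ⟨x, hS hx, h1, h2⟩

lemma RBad.mono_index {S : Set X} {M M' : Set ℕ} (h : RBad A B S M) (h' : M' ⊆ M) :
    RBad A B S M' := fun M'' hM'' hi => h M'' (hM''.trans h') hi

lemma not_rbad_iff {S : Set X} {M : Set ℕ} :
    ¬ RBad A B S M ↔ ∃ M' ⊆ M, M'.Infinite ∧ RGood A B S M' := by
  unfold RBad RGood
  push_neg
  constructor
  · rintro ⟨M', h1, h2, h3⟩
    refine ⟨M', h1, h2, fun x hx => ?_⟩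
    by_cases hA : {n | n ∈ M' ∧ x ∈ A n}.Infinite
    · exact Or.inr (h3 x hx hA)
    · exact Or.inl (Set.not_infinite.mp hA)
  · rintro ⟨M', h1, h2, h3⟩
    refine ⟨M', h1, h2, fun x hx hA => ?_⟩
    rcases h3 x hx with h | h
    · exact absurd hA h.not_infinite
    · exact h

lemma inter_Ioi_infinite (N : Set ℕ) (hN : N.Infinite) (n : ℕ) : (N ∩ Set.Ioi n).Infinite := by
  have : N ∩ Set.Ioi n = N \ Set.Iic n := by
    ext m
    simp only [Set.mem_inter_iff, Set.mem_Ioi, Set.mem_diff, Set.mem_Iic]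
    exact and_congr_right (fun _ => by omega)
  rw [this]; exact hN.diff (Set.finite_Iic n)

lemma exists_step (𝒮 : Finset (Set X)) (M : Set ℕ) (hM : M.Infinite)
    (hbad : ∀ S ∈ 𝒮, RBad A B S M) :
    ∃ n ∈ M, ∃ M', M' ⊆ M ∧ M'.Infinite ∧ (∀ m ∈ M', n < m) ∧
      ∀ S ∈ 𝒮, RBad A B (S ∩ A n) M' ∧ RBad A B (S ∩ B n) M' := by
  by_contra hcon
  push_neg at hcon
  have step : ∀ N : Set ℕ, N ⊆ M → N.Infinite →
      ∃ n ∈ N, ∃ N', N' ⊆ N ∧ N'.Infinite ∧ (∀ m ∈ N', n < m) ∧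
        ∃ S ∈ 𝒮, ∃ b : Bool, RGood A B (S ∩ (if b then A n else B n)) N' := by
    intro N hNM hN
    obtain ⟨n, hnN⟩ := hN.nonempty
    have hN0 : (N ∩ Set.Ioi n).Infinite := inter_Ioi_infinite N hN n
    obtain ⟨S, hS, hnot⟩ := hcon n (hNM hnN) (N ∩ Set.Ioi n)
      ((Set.inter_subset_left).trans hNM) hN0 (fun m hm => hm.2)
    by_cases hA : RBad A B (S ∩ A n) (N ∩ Set.Ioi n)
    · obtain ⟨N', hsub, hinf, hgood⟩ := not_rbad_iff.mp (hnot hA)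
      exact ⟨n, hnN, N', hsub.trans Set.inter_subset_left, hinf,
        fun m hm => (hsub hm).2, S, hS, false, by simpa using hgood⟩
    · obtain ⟨N', hsub, hinf, hgood⟩ := not_rbad_iff.mp hA
      exact ⟨n, hnN, N', hsub.trans Set.inter_subset_left, hinf,
        fun m hm => (hsub hm).2, S, hS, true, by simpa using hgood⟩
  choose! n hnN N' hsub hinf hgt S hS b hgood using step
  set rec : ℕ → Set ℕ := fun k => N'^[k] M with hrecdef
  have hrs : ∀ k, rec (k+1) = N' (rec k) := fun k => Function.iterate_succ_apply' N' k M
  have hbase : ∀ k, rec k ⊆ M ∧ (rec k).Infinite := by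
    intro k; induction k with
    | zero => exact ⟨subset_rfl, hM⟩
    | succ k ih =>
      rw [hrs]
      exact ⟨(hsub _ ih.1 ih.2).trans ih.1, hinf _ ih.1 ih.2⟩
  have hchain : Antitone rec := antitone_nat_of_succ_le (fun k => by
    rw [hrs]; exact hsub _ (hbase k).1 (hbase k).2)
  set ns : ℕ → ℕ := fun k => n (rec k) with hnsdef
  have hns : ∀ k, ns k ∈ rec k := fun k => hnN _ (hbase k).1 (hbase k).2
  have hgt' : ∀ k, ∀ m ∈ rec (k+1), ns k < m := fun k m hm =>
    hgt _ (hbase k).1 (hbase k).2 m (by rwa [hrs] at hm)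
  have hmono : StrictMono ns := strictMono_nat_of_lt_succ (fun k => hgt' k _ (hns (k+1)))
  let f : ℕ → {T // T ∈ 𝒮} × Bool :=
    fun k => (⟨S (rec k), hS _ (hbase k).1 (hbase k).2⟩, b (rec k))
  obtain ⟨y, hy⟩ := Finite.exists_infinite_fiber f
  have hJ : (f ⁻¹' {y}).Infinite := Set.infinite_coe_iff.mp hy
  set Mstar : Set ℕ := ns '' (f ⁻¹' {y}) with hMstardef
  have hMstar : Mstar.Infinite := hJ.image (hmono.injective.injOn)
  have hMsub : Mstar ⊆ M := by
    rintro _ ⟨k, _, rfl⟩; exact (hbase k).1 (hns k)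
  obtain ⟨x, hxS, hxA, hxB⟩ := hbad y.1.1 y.1.2 Mstar hMsub hMstar
  have final : ∀ k, f k = y →
      x ∈ (S (rec k) ∩ if b (rec k) then A (n (rec k)) else B (n (rec k))) → False := by
    intro k hkJ hx'
    have hrecg : RGood A B (S (rec k) ∩ if b (rec k) then A (n (rec k)) else B (n (rec k)))
        (rec (k+1)) := by
      rw [hrs]; exact hgood _ (hbase k).1 (hbase k).2
    have key : ∀ (CC : ℕ → Set X), {m ∈ Mstar | x ∈ CC m}.Infinite →
        ¬ {m ∈ rec (k+1) | x ∈ CC m}.Finite := by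
      intro CC hC hfin
      apply hfin.not_infinite
      apply Set.Infinite.mono ?_ (inter_Ioi_infinite _ hC (ns k))
      rintro m ⟨⟨⟨j, hjJ, rfl⟩, hxm⟩, hgtm⟩
      have hjk : k + 1 ≤ j := hmono.lt_iff_lt.mp hgtm
      exact ⟨hchain hjk (hns j), hxm⟩
    rcases hrecg x hx' with hfin | hfin
    · exact key A hxA hfin
    · exact key B hxB hfin
  cases hb : y.2 with
  | true =>
    obtain ⟨m0, ⟨⟨k, hkJ, rfl⟩, hxAm⟩⟩ := hxA.nonempty
    have hfk : f k = y := hkJ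
    have hSk : S (rec k) = y.1.1 := congrArg (fun p => p.1.1) hfk
    have hbk : b (rec k) = true := by
      have : (f k).2 = y.2 := congrArg Prod.snd hfk
      simpa [f, hb] using this
    exact final k hfk (by rw [hSk, hbk, if_pos rfl]; exact ⟨hxS, hxAm⟩)
  | false =>
    obtain ⟨m0, ⟨⟨k, hkJ, rfl⟩, hxBm⟩⟩ := hxB.nonempty
    have hfk : f k = y := hkJ
    have hSk : S (rec k) = y.1.1 := congrArg (fun p => p.1.1) hfk
    have hbk : b (rec k) = false := by
      have : (f k).2 = y.2 := congrArg Prod.snd hfk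
      simpa [f, hb] using this
    exact final k hfk (by rw [hSk, hbk, if_neg (by simp)]; exact ⟨hxS, hxBm⟩)
end Comb

section Indep
variable {X : Type*} {A B : ℕ → Set X}

lemma exists_indep (M : Set ℕ) (hM : M.Infinite) (hbad : RBad A B Set.univ M) :
    ∃ φ : ℕ → ℕ, StrictMono φ ∧ ∀ P Q : Finset ℕ, Disjoint P Q →
      ∃ x, (∀ i ∈ P, x ∈ A (φ i)) ∧ (∀ i ∈ Q, x ∈ B (φ i)) := by
  classical
  set D : Finset ℕ → Finset ℕ → Set X := fun W P => (⋂ i ∈ P, A i) ∩ ⋂ i ∈ W \ P, B i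
    with hD
  set W : ℕ → (ℕ → ℕ) → Finset ℕ := fun k v => (Finset.range k).image v with hWdef
  set Inv : ℕ × (ℕ → ℕ) × Set ℕ → Prop := fun s =>
    s.2.2 ⊆ M ∧ s.2.2.Infinite ∧ (∀ i < s.1, ∀ m ∈ s.2.2, s.2.1 i < m) ∧
    (∀ i j, i < j → j < s.1 → s.2.1 i < s.2.1 j) ∧
    ∀ P ⊆ W s.1 s.2.1, RBad A B (D (W s.1 s.2.1) P) s.2.2 with hInvdef
  have hstep : ∀ s, Inv s → ∃ s' : ℕ × (ℕ → ℕ) × Set ℕ,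
      Inv s' ∧ s'.1 = s.1 + 1 ∧ (∀ i < s.1, s'.2.1 i = s.2.1 i) ∧ s'.2.2 ⊆ s.2.2 := by
    rintro ⟨k, v, N⟩ ⟨h1, h2, h3, h4, h5⟩
    have hbadall : ∀ T ∈ (W k v).powerset.image (fun P => D (W k v) P), RBad A B T N := by
      intro T hT
      obtain ⟨P, hP, rfl⟩ := Finset.mem_image.mp hT
      exact h5 P (Finset.mem_powerset.mp hP)
    obtain ⟨nn, hnnN, N', hN'sub, hN'inf, hN'gt, hstep2⟩ := exists_step _ N h2 hbadall
    set v' : ℕ → ℕ := Function.update v k nn with hv'def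
    have hvk : v' k = nn := Function.update_self k nn v
    have hvlt : ∀ i < k, v' i = v i := fun i hi => Function.update_of_ne (by omega) nn v
    have hWk : W k v' = W k v := by
      apply Finset.image_congr
      intro i hi
      exact hvlt i (Finset.mem_range.mp (by simpa using hi))
    have hWeq : W (k+1) v' = insert nn (W k v) := by
      ext m
      simp only [hWdef, Finset.mem_image, Finset.mem_insert, Finset.mem_range]
      constructor
      · rintro ⟨i, hi, rfl⟩
        rcases Nat.lt_succ_iff_lt_or_eq.mp hi with h | h
        · exact Or.inr ⟨i, h, (hvlt i h).symm⟩
        · subst h; exact Or.inl hvk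
      · rintro (rfl | ⟨i, hi, rfl⟩)
        · exact ⟨k, by omega, hvk⟩
        · exact ⟨i, by omega, hvlt i hi⟩
    have hnnotin : nn ∉ W k v := by
      intro hmem
      obtain ⟨i, hi, rfl⟩ := Finset.mem_image.mp hmem
      exact absurd (h3 i (Finset.mem_range.mp hi) _ hnnN) (lt_irrefl _)
    refine ⟨(k+1, v', N'), ⟨hN'sub.trans h1, hN'inf, ?_, ?_, ?_⟩, rfl, hvlt, hN'sub⟩
    · intro i hi m hm
      show v' i < m
      rcases Nat.lt_succ_iff_lt_or_eq.mp hi with hik | hik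
      · rw [hvlt i hik]; exact h3 i hik m (hN'sub hm)
      · subst hik; rw [hvk]; exact hN'gt m hm
    · intro i j hij hjk
      show v' i < v' j
      rcases Nat.lt_succ_iff_lt_or_eq.mp hjk with hjk' | hjk'
      · rw [hvlt i (by omega), hvlt j hjk']; exact h4 i j hij hjk'
      · subst hjk'; rw [hvlt i hij, hvk]; exact h3 i hij _ hnnN
    · intro P hP
      rw [hWeq] at hP ⊢
      set P0 := P.erase nn with hP0def
      have hP0 : P0 ⊆ W k v := by
        intro i hi
        have h1' := Finset.mem_of_mem_erase hi
        have h2' := Finset.ne_of_mem_erase hi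
        rcases Finset.mem_insert.mp (hP h1') with h | h
        · exact absurd h h2'
        · exact h
      have hT : D (W k v) P0 ∈ (W k v).powerset.image (fun P => D (W k v) P) :=
        Finset.mem_image_of_mem _ (Finset.mem_powerset.mpr hP0)
      obtain ⟨hbadA, hbadB⟩ := hstep2 _ hT
      by_cases hn : nn ∈ P
      · have hPP : P = insert nn P0 := (Finset.insert_erase hn).symm
        have hsd : insert nn (W k v) \ P = W k v \ P0 := by
          rw [hPP]
          ext i
          simp only [Finset.mem_sdiff, Finset.mem_insert, Finset.mem_erase, hP0def]
          constructor
          · rintro ⟨h | h, hni⟩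
            · exact absurd (Or.inl h) hni
            · exact ⟨h, fun hc => hni (Or.inr hc)⟩
          · rintro ⟨hi, hni⟩
            refine ⟨Or.inr hi, ?_⟩
            rintro (rfl | hc)
            · exact hnnotin hi
            · exact hni hc
        have hseteq : D (insert nn (W k v)) P = D (W k v) P0 ∩ A nn := by
          rw [hD]
          simp only []
          rw [hsd, hPP, Finset.set_biInter_insert]
          ext z
          simp only [Set.mem_inter_iff]
          tauto
        rw [hseteq]
        exact hbadA
      · have hPP : P0 = P := Finset.erase_eq_of_notMem hn
        have hPW : P ⊆ W k v := by
          intro i hi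
          rcases Finset.mem_insert.mp (hP hi) with h | h
          · exact absurd (h ▸ hi) hn
          · exact h
        have hsd : insert nn (W k v) \ P = insert nn (W k v \ P) := by
          ext i
          simp only [Finset.mem_sdiff, Finset.mem_insert]
          constructor
          · rintro ⟨h | h, hni⟩
            · exact Or.inl h
            · exact Or.inr ⟨h, hni⟩
          · rintro (rfl | ⟨hi, hni⟩)
            · exact ⟨Or.inl rfl, hn⟩
            · exact ⟨Or.inr hi, hni⟩
        have hseteq : D (insert nn (W k v)) P = D (W k v) P0 ∩ B nn := by
          rw [hD]
          simp only []
          rw [hsd, hPP, Finset.set_biInter_insert]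
          ext z
          simp only [Set.mem_inter_iff]
          tauto
        rw [hseteq]
        exact hbadB
  set F : (ℕ × (ℕ → ℕ) × Set ℕ) → (ℕ × (ℕ → ℕ) × Set ℕ) := fun s =>
    if h : Inv s then (hstep s h).choose else s with hFdef
  set recs : ℕ → ℕ × (ℕ → ℕ) × Set ℕ := fun k => F^[k] (0, fun _ => 0, M) with hrecdef
  have hrs : ∀ k, recs (k+1) = F (recs k) := fun k =>
    Function.iterate_succ_apply' F k (0, fun _ => 0, M)
  have h0 : Inv (0, fun _ => 0, M) := by
    refine ⟨subset_rfl, hM, by omega, by omega, ?_⟩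
    intro P hP
    have hPe : P = ∅ := Finset.subset_empty.mp (by simpa [hWdef] using hP)
    have : D (W 0 (fun _ => 0)) P = Set.univ := by
      subst hPe; simp [hD, hWdef]
    rw [this]
    exact hbad
  have hInvk : ∀ k, Inv (recs k) ∧ (recs k).1 = k := by
    intro k; induction k with
    | zero => exact ⟨h0, rfl⟩
    | succ k ih =>
      rw [hrs, hFdef]
      simp only [dif_pos ih.1]
      obtain ⟨hi, hk, _, _⟩ := (hstep (recs k) ih.1).choose_spec
      exact ⟨hi, by rw [hk, ih.2]⟩
  have hsucc : ∀ k, (∀ i < k, (recs (k+1)).2.1 i = (recs k).2.1 i) ∧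
      (recs (k+1)).2.2 ⊆ (recs k).2.2 := by
    intro k
    have h := hrs k
    rw [hFdef] at h
    simp only [dif_pos (hInvk k).1] at h
    obtain ⟨_, _, hs1, hs2⟩ := (hstep (recs k) (hInvk k).1).choose_spec
    rw [h]
    exact ⟨fun i hi => hs1 i (by rw [(hInvk k).2]; exact hi), hs2⟩
  set φ : ℕ → ℕ := fun j => (recs (j+1)).2.1 j with hφdef
  have hstable : ∀ k j, j < k → (recs k).2.1 j = φ j := by
    intro k
    induction k with
    | zero => omega
    | succ k ih =>
      intro j hj
      by_cases hjk : j < k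
      · rw [(hsucc k).1 j hjk, ih j hjk]
      · have : j = k := by omega
        subst this
        rfl
  have hchain : Antitone (fun k => (recs k).2.2) :=
    antitone_nat_of_succ_le (fun k => (hsucc k).2)
  have hφmono : StrictMono φ := by
    intro i j hij
    have h4 := (hInvk (j+1)).1.2.2.2.1
    have hlt := h4 i j hij (by rw [(hInvk (j+1)).2]; omega)
    rwa [hstable (j+1) i (by omega), hstable (j+1) j (by omega)] at hlt
  refine ⟨φ, hφmono, ?_⟩
  intro P Q hPQ
  set k := (P ∪ Q).sup id + 1 with hkdef
  have hik : ∀ i ∈ P ∪ Q, i < k := by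
    intro i hi
    have h' : i ≤ (P ∪ Q).sup id := by simpa using Finset.le_sup (f := id) hi
    omega
  set v : ℕ → ℕ := (recs k).2.1 with hvdef
  have hstk : ∀ i ∈ P ∪ Q, v i = φ i := fun i hi => hstable k i (hik i hi)
  set Pv := P.image v with hPvdef
  have hPrange : P ⊆ Finset.range k := fun i hi =>
    Finset.mem_range.mpr (hik i (Finset.mem_union_left _ hi))
  have hPv : Pv ⊆ W k v := Finset.image_subset_image hPrange
  have hk1 : (recs k).1 = k := (hInvk k).2
  have h5' := (hInvk k).1.2.2.2.2
  have h4' := (hInvk k).1.2.2.2.1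
  rw [hk1] at h5' h4'
  have hbadD := h5' Pv hPv
  obtain ⟨x, hx, _, _⟩ := hbadD (recs k).2.2 subset_rfl (hInvk k).1.2.1
  have hinj : ∀ i j, i < k → j < k → v i = v j → i = j := by
    intro i j hi hj hv
    by_contra hne
    rcases Nat.lt_or_ge i j with h | h
    · exact absurd hv (ne_of_lt (h4' i j h hj))
    · have : j < i := by omega
      exact absurd hv.symm (ne_of_lt (h4' j i this hi))
  obtain ⟨hxA, hxB⟩ := hx
  refine ⟨x, ?_, ?_⟩
  · intro i hi
    have hmem : v i ∈ Pv := Finset.mem_image_of_mem v hi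
    have := Set.mem_iInter₂.mp hxA (v i) hmem
    rwa [hstk i (Finset.mem_union_left _ hi)] at this
  · intro i hi
    have hvW : v i ∈ W k v :=
      Finset.mem_image_of_mem v (Finset.mem_range.mpr (hik i (Finset.mem_union_right _ hi)))
    have hvnP : v i ∉ Pv := by
      intro hc
      obtain ⟨i', hi', hv'⟩ := Finset.mem_image.mp hc
      have : i' = i := hinj i' i (hik i' (Finset.mem_union_left _ hi'))
        (hik i (Finset.mem_union_right _ hi)) hv'
      subst this
      exact Finset.disjoint_left.mp hPQ hi' hi
    have hmem : v i ∈ W k v \ Pv := Finset.mem_sdiff.mpr ⟨hvW, hvnP⟩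
    have := Set.mem_iInter₂.mp hxB (v i) hmem
    rwa [hstk i (Finset.mem_union_right _ hi)] at this
end Indep

/-- Rosenthal's lemma (one direction): a uniformly bounded family of continuous
functions on a compact space containing no independent sequence has the property
that every sequence in it admits a pointwise convergent subsequence. -/
theorem pointwise_convergent_subseq_of_no_indep {X : Type*} [TopologicalSpace X]
    [CompactSpace X] (F : Set (X → ℝ)) (C : ℝ)
    (hcont : ∀ f ∈ F, Continuous f)
    (hbd : ∀ f ∈ F, ∀ x, |f x| ≤ C)
    (hni : ¬ ∃ g : ℕ → X → ℝ, (∀ n, g n ∈ F) ∧ IndepSeq g) :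
    ∀ g : ℕ → X → ℝ, (∀ n, g n ∈ F) →
      ∃ φ : ℕ → ℕ, StrictMono φ ∧
        ∃ h : X → ℝ, ∀ x, Tendsto (fun n => g (φ n) x) atTop (𝓝 (h x)) := by
  intro g hg
  classical
  set A : ℚ × ℚ → ℕ → Set X := fun q n => {x | g n x < (q.1 : ℝ)} with hA
  set B : ℚ × ℚ → ℕ → Set X := fun q n => {x | (q.2 : ℝ) < g n x} with hB
  by_cases H : ∀ q : ℚ × ℚ, q.1 < q.2 → ∀ M : Set ℕ, M.Infinite →
      ∃ M' ⊆ M, M'.Infinite ∧ RGood (A q) (B q) Set.univ M'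
  · -- diagonalization: pointwise convergent subsequence exists
    set ee := Denumerable.eqv (ℚ × ℚ) with hee
    set e : ℕ → ℚ × ℚ := fun k => ee.symm k with he
    have hstep : ∀ k (M : Set ℕ), M.Infinite → ∃ M' ⊆ M, M'.Infinite ∧
        ((e k).1 < (e k).2 → RGood (A (e k)) (B (e k)) Set.univ M') := by
      intro k M hM
      by_cases hk : (e k).1 < (e k).2
      · obtain ⟨M', h1, h2, h3⟩ := H (e k) hk M hM
        exact ⟨M', h1, h2, fun _ => h3⟩
      · exact ⟨M, subset_rfl, hM, fun h => absurd h hk⟩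
    choose! nxt hsub hinf hgood using hstep
    set Ms : ℕ → Set ℕ := fun k => Nat.rec Set.univ (fun k ih => nxt k ih) k with hMs
    have hMsS : ∀ k, Ms (k+1) = nxt k (Ms k) := fun k => rfl
    have hMsInf : ∀ k, (Ms k).Infinite := by
      intro k; induction k with
      | zero => exact Set.infinite_univ
      | succ k ih => rw [hMsS]; exact hinf k _ ih
    have hMsAnti : Antitone Ms := antitone_nat_of_succ_le (fun k => by
      rw [hMsS]; exact hsub k _ (hMsInf k))
    have hMsGood : ∀ k, (e k).1 < (e k).2 →
        RGood (A (e k)) (B (e k)) Set.univ (Ms (k+1)) := by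
      intro k hk
      rw [hMsS]
      exact hgood k _ (hMsInf k) hk
    have hex : ∀ k (b : ℕ), ∃ m ∈ Ms k, b < m := fun k b => (hMsInf k).exists_gt b
    choose pick hp1 hp2 using hex
    set φ : ℕ → ℕ := fun k => Nat.rec (pick 1 0) (fun k ih => pick (k+2) ih) k with hφ
    have hφS : ∀ k, φ (k+1) = pick (k+2) (φ k) := fun k => rfl
    have hφmem : ∀ k, φ k ∈ Ms (k+1) := by
      intro k; cases k with
      | zero => exact hp1 1 0
      | succ k => rw [hφS]; exact hp1 (k+2) (φ k)
    have hφmono : StrictMono φ := strictMono_nat_of_lt_succ (fun k => by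
      rw [hφS]; exact hp2 (k+2) (φ k))
    refine ⟨φ, hφmono, fun x => limsup (fun n => g (φ n) x) atTop, fun x => ?_⟩
    set a : ℕ → ℝ := fun n => g (φ n) x with ha
    have hbddle : IsBoundedUnder (· ≤ ·) atTop a :=
      isBoundedUnder_of ⟨C, fun n => (abs_le.mp (hbd _ (hg (φ n)) x)).2⟩
    have hbddge : IsBoundedUnder (· ≥ ·) atTop a :=
      isBoundedUnder_of ⟨-C, fun n => (abs_le.mp (hbd _ (hg (φ n)) x)).1⟩
    have hle : liminf a atTop ≤ limsup a atTop := liminf_le_limsup hbddle hbddge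
    have hge : ¬ liminf a atTop < limsup a atTop := by
      intro hlt
      obtain ⟨s, hs1, hs2⟩ := exists_rat_btwn hlt
      obtain ⟨r, hr1, hr2⟩ := exists_rat_btwn hs2
      set q : ℚ × ℚ := (s, r) with hqdef
      set k : ℕ := ee q with hkdef
      have hk : e k = q := ee.symm_apply_apply q
      have hq : (e k).1 < (e k).2 := by
        rw [hk]
        exact_mod_cast hr1
      have hgoodk := hMsGood k hq
      have hfreqA : ∃ᶠ n in atTop, a n < (s:ℝ) :=
        frequently_lt_of_liminf_lt hbddle.isCoboundedUnder_ge hs1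
      have hfreqB : ∃ᶠ n in atTop, (r:ℝ) < a n :=
        frequently_lt_of_lt_limsup hbddge.isCoboundedUnder_le hr2
      have hinfA : {n : ℕ | a n < (s:ℝ)}.Infinite :=
        Nat.frequently_atTop_iff_infinite.mp hfreqA
      have hinfB : {n : ℕ | (r:ℝ) < a n}.Infinite :=
        Nat.frequently_atTop_iff_infinite.mp hfreqB
      have key : ∀ (p : ℕ → Prop) (CC : ℕ → Set X), {n | p n}.Infinite →
          (∀ n, p n → x ∈ CC (φ n)) → ¬ {m ∈ Ms (k+1) | x ∈ CC m}.Finite := by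
        intro p CC hp hmem hfin
        apply hfin.not_infinite
        have h1 : ({n | p n} \ {i | i < k}).Infinite := hp.diff (Set.finite_lt_nat k)
        apply Set.Infinite.mono ?_ (h1.image hφmono.injective.injOn)
        rintro m ⟨j, ⟨hpj, hjk⟩, rfl⟩
        simp only [Set.mem_setOf_eq, not_lt] at hjk
        exact ⟨hMsAnti (show k+1 ≤ j+1 by omega) (hφmem j), hmem j hpj⟩
      have hq1 : ((e k).1 : ℝ) = (s:ℝ) := by rw [hk]
      have hq2 : ((e k).2 : ℝ) = (r:ℝ) := by rw [hk]
      rcases hgoodk x trivial with hfin | hfin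
      · exact key (fun n => a n < (s:ℝ)) (A (e k)) hinfA
          (fun n hn => by simp only [hA, Set.mem_setOf_eq, hq1]; exact hn) hfin
      · exact key (fun n => (r:ℝ) < a n) (B (e k)) hinfB
          (fun n hn => by simp only [hB, Set.mem_setOf_eq, hq2]; exact hn) hfin
    have heq : liminf a atTop = limsup a atTop := le_antisymm hle (not_lt.mp hge)
    exact tendsto_of_liminf_eq_limsup heq rfl hbddle hbddge
  · -- independent subsequence exists: contradiction
    push_neg at H
    obtain ⟨q, hq, M, hM, hH⟩ := H
    have hbadM : RBad (A q) (B q) Set.univ M := by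
      intro M' hM' hinf
      have hng : ¬ RGood (A q) (B q) Set.univ M' := hH M' hM' hinf
      unfold RGood at hng
      push_neg at hng
      obtain ⟨x, _, hx1, hx2⟩ := hng
      exact ⟨x, trivial, hx1, hx2⟩
    obtain ⟨φ, hφ, hind⟩ := exists_indep M hM hbadM
    refine absurd ⟨fun n => g (φ n), fun n => hg (φ n),
      (q.1 : ℝ), (q.2 : ℝ), by exact_mod_cast hq, fun P Q hPQ => ?_⟩ hni
    obtain ⟨x, h1, h2⟩ := hind P Q hPQ
    exact ⟨x, h1, h2⟩
end

section
/- Let M be a Banach space and φ(x,y) = ‖x+y‖. If φ is stable on M, i.e. for all bounded sequences (a_n), (b_m) in M the iterated limits lim_n lim_m ‖a_n + b_m‖ and lim_m lim_n ‖a_n + b_m‖ agree whenever both exist, then φ has NIP on M: no sequence (a_n) in M admits r > s such that for all finite disjoint P, Q ⊆ ℕ there exists b ∈ M with ‖a_n + b‖ ≤ s for n ∈ P and ‖a_n + b‖ ≥ r for n ∈ Q. -/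
open Filter Topology

/-- Diagonal extraction: countably many `[0,2]`-valued sequences admit a common
subsequence along which all of them converge. -/
private lemma diag_lemma (F : ℕ → ℕ → ℝ) (hF : ∀ j n, F j n ∈ Set.Icc (0:ℝ) 2) :
    ∃ φ : ℕ → ℕ, StrictMono φ ∧ ∃ L : ℕ → ℝ,
      (∀ j, L j ∈ Set.Icc (0:ℝ) 2) ∧
      ∀ j, Tendsto (fun i => F j (φ i)) atTop (𝓝 (L j)) := by
  have hcomp : IsCompact (Set.univ.pi fun _ : ℕ => Set.Icc (0:ℝ) 2) :=
    isCompact_univ_pi fun _ => isCompact_Icc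
  have hmem : ∀ n, (fun j => F j n) ∈ Set.univ.pi fun _ : ℕ => Set.Icc (0:ℝ) 2 := by
    intro n j _; exact hF j n
  obtain ⟨L, hLmem, φ, hφ, hconv⟩ := hcomp.tendsto_subseq hmem
  exact ⟨φ, hφ, L, fun j => hLmem j (Set.mem_univ j), fun j => tendsto_pi_nhds.mp hconv j⟩

/-- If `φ(x,y) = ‖x+y‖` is stable on a Banach space `M` (double limit
condition on the unit ball), then `φ` has NIP on `M`. -/
theorem stable_implies_NIP {M : Type*} [NormedAddCommGroup M]
    [NormedSpace ℝ M] [CompleteSpace M]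
    (hstable : ∀ a b : ℕ → M, (∀ n, ‖a n‖ ≤ 1) → (∀ m, ‖b m‖ ≤ 1) →
      ∀ (c d : ℕ → ℝ) (u v : ℝ),
        (∀ n, Tendsto (fun m => ‖a n + b m‖) atTop (𝓝 (c n))) →
        Tendsto c atTop (𝓝 u) →
        (∀ m, Tendsto (fun n => ‖a n + b m‖) atTop (𝓝 (d m))) →
        Tendsto d atTop (𝓝 v) → u = v) :
    ¬ ∃ (a : ℕ → M) (r s : ℝ), (∀ n, ‖a n‖ ≤ 1) ∧ s < r ∧
      ∀ P Q : Finset ℕ, Disjoint P Q →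
        ∃ b : M, ‖b‖ ≤ 1 ∧ (∀ n ∈ P, ‖a n + b‖ ≤ s) ∧
          (∀ n ∈ Q, r ≤ ‖a n + b‖) := by
  rintro ⟨a, r, s, ha, hsr, hw⟩
  -- choose a witness for every pair (P, Q)
  have hw' : ∀ p : Finset ℕ × Finset ℕ, ∃ b : M, ‖b‖ ≤ 1 ∧
      (Disjoint p.1 p.2 →
        ((∀ n ∈ p.1, ‖a n + b‖ ≤ s) ∧ (∀ n ∈ p.2, r ≤ ‖a n + b‖))) := by
    intro p
    by_cases h : Disjoint p.1 p.2
    · obtain ⟨b, hb1, hb2, hb3⟩ := hw p.1 p.2 h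
      exact ⟨b, hb1, fun _ => ⟨hb2, hb3⟩⟩
    · exact ⟨0, by simp, fun h' => absurd h' h⟩
  choose w hwnorm hwspec using hw'
  obtain ⟨σ, hσ⟩ := exists_surjective_nat (Finset ℕ × Finset ℕ)
  have hbound : ∀ (n : ℕ) (b : M), ‖b‖ ≤ 1 → ‖a n + b‖ ∈ Set.Icc (0:ℝ) 2 := by
    intro n b hb
    refine ⟨norm_nonneg _, ?_⟩
    calc ‖a n + b‖ ≤ ‖a n‖ + ‖b‖ := norm_add_le _ _
      _ ≤ 1 + 1 := add_le_add (ha n) hb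
      _ = 2 := by norm_num
  -- first extraction: a subsequence of `a` along which the norm against every
  -- witness converges
  obtain ⟨φ1, hφ1, L1, hL1mem, hL1⟩ := diag_lemma (fun j n => ‖a n + w (σ j)‖)
      (fun j n => hbound n _ (hwnorm _))
  -- the limit function on all witnesses
  have hΨ : ∀ p : Finset ℕ × Finset ℕ, ∃ l, l ∈ Set.Icc (0:ℝ) 2 ∧
      Tendsto (fun i => ‖a (φ1 i) + w p‖) atTop (𝓝 l) := by
    intro p
    obtain ⟨j, hj⟩ := hσ p
    exact ⟨L1 j, hL1mem j, by simpa [hj] using hL1 j⟩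
  choose Ψ hΨmem hΨtend using hΨ
  -- the pattern sets: evens of the subsequence small, odds large
  set P : ℕ → Finset ℕ := fun k => (Finset.range (k+1)).image fun i => φ1 (2*i) with hP
  set Q : ℕ → Finset ℕ := fun k => (Finset.range (k+1)).image fun i => φ1 (2*i+1) with hQ
  have hdisj : ∀ k, Disjoint (P k) (Q k) := by
    intro k
    rw [Finset.disjoint_left]
    intro x hx hx'
    simp only [hP, hQ, Finset.mem_image, Finset.mem_range] at hx hx'
    obtain ⟨i, _, hi⟩ := hx
    obtain ⟨j, _, hj⟩ := hx'
    have := hφ1.injective (hi.trans hj.symm)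
    omega
  set b : ℕ → M := fun k => w (P k, Q k) with hb
  have hbnorm : ∀ k, ‖b k‖ ≤ 1 := fun k => hwnorm _
  have hbP : ∀ k i, i ≤ k → ‖a (φ1 (2*i)) + b k‖ ≤ s := by
    intro k i hik
    refine (hwspec (P k, Q k) (hdisj k)).1 _ ?_
    exact Finset.mem_image.mpr ⟨i, Finset.mem_range.mpr (by omega), rfl⟩
  have hbQ : ∀ k i, i ≤ k → r ≤ ‖a (φ1 (2*i+1)) + b k‖ := by
    intro k i hik
    refine (hwspec (P k, Q k) (hdisj k)).2 _ ?_
    exact Finset.mem_image.mpr ⟨i, Finset.mem_range.mpr (by omega), rfl⟩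
  set ψk : ℕ → ℝ := fun k => Ψ (P k, Q k) with hψkdef
  have hψk : ∀ k, Tendsto (fun i => ‖a (φ1 i) + b k‖) atTop (𝓝 (ψk k)) :=
    fun k => hΨtend (P k, Q k)
  -- second extraction: subsequence of the witnesses along which all rows and
  -- the tail-limit sequence converge
  obtain ⟨θ, hθ, L2, hL2mem, hL2⟩ := diag_lemma
      (fun j k => if j = 0 then ψk k else ‖a (φ1 (j-1)) + b k‖)
      (by
        intro j k
        by_cases hj : j = 0
        · simpa [hj] using hΨmem (P k, Q k)
        · simpa [hj] using hbound (φ1 (j-1)) (b k) (hbnorm k))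
  set v : ℝ := L2 0 with hv
  have hvt : Tendsto (fun k => ψk (θ k)) atTop (𝓝 v) := by simpa using hL2 0
  set c : ℕ → ℝ := fun j => L2 (j+1) with hc
  have hct : ∀ j, Tendsto (fun k => ‖a (φ1 j) + b (θ k)‖) atTop (𝓝 (c j)) := by
    intro j; simpa using hL2 (j+1)
  have hcs : ∀ i, c (2*i) ≤ s := by
    intro i
    refine le_of_tendsto (hct (2*i)) ?_
    filter_upwards [eventually_ge_atTop i] with k hk
    exact hbP (θ k) i (hk.trans (hθ.le_apply))
  have hcr : ∀ i, r ≤ c (2*i+1) := by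
    intro i
    refine ge_of_tendsto (hct (2*i+1)) ?_
    filter_upwards [eventually_ge_atTop i] with k hk
    exact hbQ (θ k) i (hk.trans (hθ.le_apply))
  -- third extraction: make the even and odd row-limit sequences converge
  obtain ⟨ρ, hρ, Le, -, hLe⟩ := diag_lemma (fun _ i => c (2*i))
      (fun _ i => by simpa using hL2mem (2*i+1))
  obtain ⟨ρ', hρ', Lo, -, hLo⟩ := diag_lemma (fun _ i => c (2*i+1))
      (fun _ i => by simpa using hL2mem (2*i+1+1))
  set u : ℝ := Le 0 with hu
  set u' : ℝ := Lo 0 with hu'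
  have hut : Tendsto (fun i => c (2 * ρ i)) atTop (𝓝 u) := hLe 0
  have hut' : Tendsto (fun i => c (2 * ρ' i + 1)) atTop (𝓝 u') := hLo 0
  have hus : u ≤ s := le_of_tendsto hut (Eventually.of_forall fun i => hcs (ρ i))
  have hur : r ≤ u' := ge_of_tendsto hut' (Eventually.of_forall fun i => hcr (ρ' i))
  -- inner limits over the `a`-subsequence exist and agree for evens and odds
  have hmono_e : StrictMono fun i => 2 * ρ i := fun x y h => by
    dsimp only; have := hρ h; omega
  have hmono_o : StrictMono fun i => 2 * ρ' i + 1 := fun x y h => by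
    dsimp only; have := hρ' h; omega
  -- first stability application (even rows)
  have h1 : u = v := by
    refine hstable (fun i => a (φ1 (2 * ρ i))) (fun k => b (θ k))
      (fun i => ha _) (fun k => hbnorm _)
      (fun i => c (2 * ρ i)) (fun k => ψk (θ k)) u v
      (fun i => hct (2 * ρ i)) hut ?_ hvt
    intro k
    exact (hψk (θ k)).comp (hmono_e.tendsto_atTop)
  -- second stability application (odd rows)
  have h2 : u' = v := by
    refine hstable (fun i => a (φ1 (2 * ρ' i + 1))) (fun k => b (θ k))
      (fun i => ha _) (fun k => hbnorm _)
      (fun i => c (2 * ρ' i + 1)) (fun k => ψk (θ k)) u' v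
      (fun i => hct (2 * ρ' i + 1)) hut' ?_ hvt
    intro k
    exact (hψk (θ k)).comp (hmono_o.tendsto_atTop)
  linarith
end

section
/- If a Banach space X contains an isometric copy of c₀, then the formula φ(x,y) = ‖x+y‖ has the independence property on X: there exist a sequence (a_n) in the unit ball of X and reals s = 1 < r = 2 such that for all finite disjoint P, Q ⊆ ℕ there is b in the unit ball with ‖a_n + b‖ ≤ 1 for n ∈ P and ‖a_n + b‖ ≥ 2 for n ∈ Q. -/
open Filter Topology ZeroAtInfty

/-- Indicator of a finite set as an element of `C₀(ℕ, ℝ)`. -/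
noncomputable def indC0 (Q : Finset ℕ) : C₀(ℕ, ℝ) :=
  { toFun := fun m => if m ∈ Q then (1 : ℝ) else 0
    continuous_toFun := continuous_of_discreteTopology
    zero_at_infty' := by
      rw [cocompact_eq_cofinite]
      apply tendsto_nhds_of_eventually_eq
      filter_upwards [Q.eventually_cofinite_notMem] with m hm
      simp [hm] }

lemma indC0_apply (Q : Finset ℕ) (m : ℕ) :
    indC0 Q m = if m ∈ Q then (1 : ℝ) else 0 := rfl

lemma norm_indC0_le (Q : Finset ℕ) : ‖indC0 Q‖ ≤ 1 := by
  rw [← ZeroAtInftyContinuousMap.norm_toBCF_eq_norm]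
  apply BoundedContinuousFunction.norm_le (by norm_num) |>.mpr
  intro m
  simp only [ZeroAtInftyContinuousMap.toBCF_apply, indC0_apply]
  split <;> simp

/-- If a Banach space contains an isometric copy of `c₀ = C₀(ℕ, ℝ)`, then the
formula `φ(x,y) = ‖x+y‖` has the independence property on it, with constants
`s = 1 < r = 2`. -/
theorem IP_of_c0_subspace {X : Type*} [NormedAddCommGroup X]
    [NormedSpace ℝ X] [CompleteSpace X]
    (T : C₀(ℕ, ℝ) →ₗᵢ[ℝ] X) :
    ∃ a : ℕ → X, (∀ n, ‖a n‖ ≤ 1) ∧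
      ∀ P Q : Finset ℕ, Disjoint P Q →
        ∃ b : X, ‖b‖ ≤ 1 ∧ (∀ n ∈ P, ‖a n + b‖ ≤ 1) ∧
          (∀ n ∈ Q, 2 ≤ ‖a n + b‖) := by
  refine ⟨fun n => T (indC0 {n}), fun n => ?_, fun P Q hPQ => ?_⟩
  · rw [T.norm_map]; exact norm_indC0_le _
  refine ⟨T (indC0 Q), by rw [T.norm_map]; exact norm_indC0_le _, ?_, ?_⟩
  · intro n hn
    rw [← T.map_add, T.norm_map, ← ZeroAtInftyContinuousMap.norm_toBCF_eq_norm]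
    apply BoundedContinuousFunction.norm_le (by norm_num) |>.mpr
    intro m
    have hnQ : n ∉ Q := fun h => (Finset.disjoint_left.mp hPQ hn) h
    simp only [ZeroAtInftyContinuousMap.toBCF_apply,
      ZeroAtInftyContinuousMap.add_apply, indC0_apply, Finset.mem_singleton]
    rcases eq_or_ne m n with rfl | hmn
    · simp [hnQ]
    · simp [hmn]
      split <;> simp
  · intro n hn
    rw [← T.map_add, T.norm_map, ← ZeroAtInftyContinuousMap.norm_toBCF_eq_norm]
    calc (2 : ℝ) = ‖(indC0 {n} + indC0 Q).toBCF n‖ := by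
          simp [ZeroAtInftyContinuousMap.toBCF_apply, indC0_apply, hn]; norm_num
      _ ≤ _ := BoundedContinuousFunction.norm_coe_le_norm _ n
end

section
/- In c₀, let s_n = e_1 + ⋯ + e_n and ψ(x, y) = max(‖x + y‖, ‖x − y‖). Then ψ(x, s_m) ≤ ψ(x, s_n) for all x ∈ c₀ whenever m ≤ n, and ψ(e_n, s_m) < ψ(e_m, s_n) for all m < n; hence ψ witnesses the strict order property on c₀. -/
open Filter Topology

/-- The sup norm on real sequences. -/
noncomputable def supNorm (x : ℕ → ℝ) : ℝ := ⨆ k, |x k|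

/-- Membership in `c₀`: the sequence tends to `0`. -/
def memc0 (x : ℕ → ℝ) : Prop := Tendsto x atTop (𝓝 0)

/-- The standard unit vectors of `c₀` (`0`-indexed). -/
def stdBasis (n : ℕ) : ℕ → ℝ := fun k => if k = n then 1 else 0

/-- The summing basis: `sB n = e_0 + ⋯ + e_{n-1}`. -/
def sB (n : ℕ) : ℕ → ℝ := fun k => if k < n then 1 else 0

/-- `ψ(x,y) = max(‖x+y‖, ‖x−y‖)`. -/
noncomputable def psi (x y : ℕ → ℝ) : ℝ :=
  max (supNorm (fun k => x k + y k)) (supNorm (fun k => x k - y k))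

lemma supNorm_le {x : ℕ → ℝ} {c : ℝ} (h : ∀ k, |x k| ≤ c) : supNorm x ≤ c :=
  ciSup_le h

lemma le_supNorm {x : ℕ → ℝ} (hb : BddAbove (Set.range fun k => |x k|)) (k : ℕ) :
    |x k| ≤ supNorm x :=
  le_ciSup hb k

lemma bdd_of_bound {x : ℕ → ℝ} {c : ℝ} (h : ∀ k, |x k| ≤ c) :
    BddAbove (Set.range fun k => |x k|) :=
  ⟨c, by rintro y ⟨k, rfl⟩; exact h k⟩

lemma abs_le_max_abs (a c : ℝ) : |a| ≤ max |a + c| |a - c| := by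
  have h1 : |a| ≤ (|a + c| + |a - c|) / 2 := by
    have : |(a + c) + (a - c)| ≤ |a + c| + |a - c| := abs_add_le _ _
    have h2 : |(a + c) + (a - c)| = 2 * |a| := by
      have : (a + c) + (a - c) = 2 * a := by ring
      rw [this, abs_mul]
      norm_num
    linarith
  have := le_max_left |a + c| |a - c|
  have := le_max_right |a + c| |a - c|
  linarith

/-- In `c₀`, `ψ(x, s_m) ≤ ψ(x, s_n)` for `m ≤ n`, and
`ψ(e_n, s_m) < ψ(e_m, s_n)` for `m < n`; so `ψ` witnesses the strict order
property on `c₀`. -/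
theorem psi_strict_order_property :
    (∀ x : ℕ → ℝ, memc0 x → ∀ m n : ℕ, m ≤ n → psi x (sB m) ≤ psi x (sB n)) ∧
    (∀ m n : ℕ, m < n → psi (stdBasis n) (sB m) < psi (stdBasis m) (sB n)) := by
  constructor
  · intro x hx m n hmn
    -- x is bounded
    obtain ⟨C, hC⟩ : ∃ C, ∀ k, |x k| ≤ C := by
      have habs : Tendsto (fun k => |x k|) atTop (𝓝 0) := by
        simpa using hx.abs
      obtain ⟨C, hC⟩ := habs.bddAbove_range
      exact ⟨C, fun k => hC ⟨k, rfl⟩⟩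
    have hbp : BddAbove (Set.range fun k => |x k + sB n k|) :=
      bdd_of_bound (c := C + 1) fun k => by
        have := abs_add_le (x k) (sB n k)
        have : |sB n k| ≤ 1 := by simp [sB]; split <;> norm_num
        calc |x k + sB n k| ≤ |x k| + |sB n k| := abs_add_le _ _
          _ ≤ C + 1 := add_le_add (hC k) this
    have hbm : BddAbove (Set.range fun k => |x k - sB n k|) :=
      bdd_of_bound (c := C + 1) fun k => by
        have : |sB n k| ≤ 1 := by simp [sB]; split <;> norm_num
        calc |x k - sB n k| ≤ |x k| + |sB n k| := abs_sub _ _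
          _ ≤ C + 1 := add_le_add (hC k) this
    have key : ∀ (ε : ℝ), ε = 1 ∨ ε = -1 →
        supNorm (fun k => x k + ε * sB m k) ≤ psi x (sB n) := by
      intro ε hε
      apply supNorm_le
      intro k
      by_cases hk : k < m
      · have hkn : k < n := lt_of_lt_of_le hk hmn
        have h1 : sB m k = 1 := by simp [sB, hk]
        have h2 : sB n k = 1 := by simp [sB, hkn]
        rcases hε with rfl | rfl
        · rw [h1]
          calc |x k + 1 * 1| = |x k + 1| := by norm_num
            _ ≤ supNorm (fun k => x k + sB n k) := by
                simpa [h2] using le_supNorm hbp k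
            _ ≤ psi x (sB n) := le_max_left _ _
        · rw [h1]
          calc |x k + (-1) * 1| = |x k - 1| := by rw [neg_one_mul]; ring_nf
            _ ≤ supNorm (fun k => x k - sB n k) := by
                simpa [h2] using le_supNorm hbm k
            _ ≤ psi x (sB n) := le_max_right _ _
      · have h1 : sB m k = 0 := by simp [sB, hk]
        rw [h1, mul_zero, add_zero]
        calc |x k| ≤ max |x k + sB n k| |x k - sB n k| := abs_le_max_abs _ _
          _ ≤ psi x (sB n) := by
              apply max_le
              · exact le_trans (le_supNorm hbp k) (le_max_left _ _)
              · exact le_trans (le_supNorm hbm k) (le_max_right _ _)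
    apply max_le
    · have := key 1 (Or.inl rfl)
      simpa using this
    · have := key (-1) (Or.inr rfl)
      have heq : (fun k => x k + (-1) * sB m k) = fun k => x k - sB m k := by
        funext k; ring
      rw [heq] at this
      exact this
  · intro m n hmn
    -- psi (stdBasis n) (sB m) = 1
    have hb1 : ∀ k, |stdBasis n k + sB m k| ≤ 1 := by
      intro k
      simp only [stdBasis, sB]
      by_cases h : k = n
      · rw [if_pos h]
        have hkm : ¬ (k < m) := by omega
        rw [if_neg hkm]; norm_num
      · rw [if_neg h]; split <;> norm_num
    have hb2 : ∀ k, |stdBasis n k - sB m k| ≤ 1 := by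
      intro k
      simp only [stdBasis, sB]
      by_cases h : k = n
      · rw [if_pos h]
        have hkm : ¬ (k < m) := by omega
        rw [if_neg hkm]; norm_num
      · rw [if_neg h]; split <;> norm_num
    have hle : psi (stdBasis n) (sB m) ≤ 1 :=
      max_le (supNorm_le hb1) (supNorm_le hb2)
    -- psi (stdBasis m) (sB n) ≥ 2
    have hbp : BddAbove (Set.range fun k => |stdBasis m k + sB n k|) := by
      apply bdd_of_bound (c := 2)
      intro k
      simp only [stdBasis, sB]
      split <;> split <;> norm_num
    have h2 : (2 : ℝ) ≤ psi (stdBasis m) (sB n) := by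
      have := le_supNorm hbp m
      have hm : |stdBasis m m + sB n m| = 2 := by
        simp [stdBasis, sB, hmn]
        norm_num
      rw [hm] at this
      exact le_trans this (le_max_left _ _)
    linarith
end

section
/- The Tsirelson norm satisfies the implicit equation ‖x‖ = max(‖x‖_∞, sup{ (1/2)∑_{i=1}^k ‖E_i x‖ : (E_i)_{i=1}^k admissible }) for all x ∈ c₀₀, where ‖x‖ = lim_n ‖x‖_n is defined by the inductive construction. -/
open Filter Topology

/-- Restriction of a sequence to a finite set of coordinates. -/
def restr (E : Finset ℕ) (x : ℕ → ℝ) : ℕ → ℝ := fun k => if k ∈ E then x k else 0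

/-- `(E i)_{i < k}` is admissible: the sets are nonempty, `k ≤ min E 0`, and the
sets are successive (`max E i < min E (i+1)`). -/
def Admissible (E : ℕ → Finset ℕ) (k : ℕ) : Prop :=
  (∀ i < k, (E i).Nonempty) ∧ (0 < k → ∀ n ∈ E 0, k ≤ n) ∧
    ∀ i, i + 1 < k → ∀ a ∈ E i, ∀ b ∈ E (i + 1), a < b

/-- The Figiel–Johnson approximating norms: `‖x‖₀ = ‖x‖_∞` and
`‖x‖_{n+1} = max (‖x‖_n) (sup { (1/2) ∑ᵢ ‖Eᵢ x‖_n : (Eᵢ) admissible })`. -/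
noncomputable def tnorm : ℕ → (ℕ → ℝ) → ℝ
  | 0 => fun x => ⨆ k, |x k|
  | n + 1 => fun x =>
      max (tnorm n x)
        (sSup {r | ∃ (k : ℕ) (E : ℕ → Finset ℕ), Admissible E k ∧
          r = (1 / 2) * ∑ i ∈ Finset.range k, tnorm n (restr (E i) x)})

/-- The Tsirelson norm, as the limit (= supremum, by monotonicity) of the
approximating norms. -/
noncomputable def TNorm (x : ℕ → ℝ) : ℝ := ⨆ n, tnorm n x

lemma tnorm_succ (n : ℕ) (x : ℕ → ℝ) :
    tnorm (n + 1) x = max (tnorm n x)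
      (sSup {r | ∃ (k : ℕ) (E : ℕ → Finset ℕ), Admissible E k ∧
        r = (1 / 2) * ∑ i ∈ Finset.range k, tnorm n (restr (E i) x)}) := rfl

lemma admissible_zero (E : ℕ → Finset ℕ) : Admissible E 0 :=
  ⟨fun i hi => (Nat.not_lt_zero i hi).elim, fun h => (Nat.lt_irrefl 0 h).elim,
    fun _ hi => (Nat.not_lt_zero _ hi).elim⟩

lemma zero_mem_sset (G : Finset ℕ → ℝ) :
    (0 : ℝ) ∈ {r | ∃ (k : ℕ) (E : ℕ → Finset ℕ), Admissible E k ∧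
      r = (1 / 2) * ∑ i ∈ Finset.range k, G (E i)} :=
  ⟨0, fun _ => ∅, admissible_zero _, by simp⟩

lemma adm_lt {E : ℕ → Finset ℕ} {k : ℕ} (h : Admissible E k) :
    ∀ j, j < k → ∀ i, i < j → ∀ a ∈ E i, ∀ b ∈ E j, a < b := by
  intro j
  induction j with
  | zero => intro _ i hi; exact (Nat.not_lt_zero i hi).elim
  | succ j ih =>
    intro hj i hi a ha b hb
    rcases eq_or_lt_of_le (Nat.lt_succ_iff.mp hi) with rfl | h'
    · exact h.2.2 i hj a ha b hb
    · obtain ⟨c, hc⟩ := h.1 j (by omega)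
      exact (ih (by omega) i h' a ha c hc).trans (h.2.2 j hj c hc b hb)

lemma adm_pairwiseDisjoint {E : ℕ → Finset ℕ} {k : ℕ} (h : Admissible E k) (s : Finset ℕ) :
    (↑(Finset.range k) : Set ℕ).PairwiseDisjoint (fun i => s ∩ E i) := by
  have key : ∀ i j, i < j → j < k → Disjoint (s ∩ E i) (s ∩ E j) := by
    intro i j hlt hj
    refine Finset.disjoint_left.mpr fun a hai haj => ?_
    have := adm_lt h j hj i hlt a (Finset.mem_inter.mp hai).2 a (Finset.mem_inter.mp haj).2
    omega
  intro i hi j hj hij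
  simp only [Finset.coe_range, Set.mem_Iio] at hi hj
  rcases lt_or_gt_of_ne hij with hlt | hlt
  · exact key i j hlt hj
  · exact (key j i hlt hi).symm

lemma sum_inter_le {E : ℕ → Finset ℕ} {k : ℕ} (h : Admissible E k) (s : Finset ℕ)
    (g : ℕ → ℝ) (hg : ∀ j, 0 ≤ g j) :
    ∑ i ∈ Finset.range k, ∑ j ∈ s ∩ E i, g j ≤ ∑ j ∈ s, g j := by
  rw [← Finset.sum_biUnion (adm_pairwiseDisjoint h s)]
  refine Finset.sum_le_sum_of_subset_of_nonneg ?_ (fun j _ _ => hg j)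
  intro a ha
  obtain ⟨i, _, hai⟩ := Finset.mem_biUnion.mp ha
  exact (Finset.mem_inter.mp hai).1

/-- Generic half-sum bound: if `F` is dominated by the ℓ¹-norm on supported
functions, then the admissible half-sums of `F` are bounded by the ℓ¹-norm. -/
lemma half_sum_le {s : Finset ℕ} {x : ℕ → ℝ} (hs : ∀ j ∉ s, x j = 0)
    (F : (ℕ → ℝ) → ℝ)
    (hF : ∀ (t : Finset ℕ) (y : ℕ → ℝ), (∀ j ∉ t, y j = 0) → F y ≤ ∑ j ∈ t, |y j|)
    {k : ℕ} {E : ℕ → Finset ℕ} (hadm : Admissible E k) :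
    (1 / 2) * ∑ i ∈ Finset.range k, F (restr (E i) x) ≤ ∑ j ∈ s, |x j| := by
  have h1 : ∀ i, F (restr (E i) x) ≤ ∑ j ∈ s ∩ E i, |x j| := by
    intro i
    have hsupp : ∀ j ∉ s ∩ E i, restr (E i) x j = 0 := by
      intro j hj
      by_cases hE : j ∈ E i
      · have : j ∉ s := fun hjs => hj (Finset.mem_inter.mpr ⟨hjs, hE⟩)
        simp [restr, hE, hs j this]
      · simp [restr, hE]
    refine (hF (s ∩ E i) _ hsupp).trans_eq (Finset.sum_congr rfl fun j hj => ?_)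
    simp [restr, (Finset.mem_inter.mp hj).2]
  have h2 : ∑ i ∈ Finset.range k, F (restr (E i) x) ≤ ∑ j ∈ s, |x j| :=
    (Finset.sum_le_sum fun i _ => h1 i).trans
      (sum_inter_le hadm s _ fun j => abs_nonneg _)
  have h3 : (0 : ℝ) ≤ ∑ j ∈ s, |x j| := Finset.sum_nonneg fun j _ => abs_nonneg _
  nlinarith [h2, h3]

/-- ℓ¹ bound for the approximating norms on supported functions. -/
lemma tnorm_le_l1 (n : ℕ) : ∀ (s : Finset ℕ) (x : ℕ → ℝ), (∀ j ∉ s, x j = 0) →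
    tnorm n x ≤ ∑ j ∈ s, |x j| := by
  induction n with
  | zero =>
    intro s x hs
    refine ciSup_le fun j => ?_
    by_cases hj : j ∈ s
    · exact Finset.single_le_sum (f := fun i => |x i|) (fun i _ => abs_nonneg _) hj
    · simp only [hs j hj, abs_zero]
      exact Finset.sum_nonneg fun i _ => abs_nonneg _
  | succ n ih =>
    intro s x hs
    rw [tnorm_succ]
    refine max_le (ih s x hs) (csSup_le ⟨0, zero_mem_sset (fun F => tnorm n (restr F x))⟩ ?_)
    rintro r ⟨k, E, hadm, rfl⟩
    exact half_sum_le hs (tnorm n) (fun t y ht => ih t y ht) hadm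

lemma tnorm_mono (x : ℕ → ℝ) : Monotone fun n => tnorm n x :=
  monotone_nat_of_le_succ fun n => by rw [tnorm_succ]; exact le_max_left _ _

lemma tnorm_bddAbove {s : Finset ℕ} {x : ℕ → ℝ} (hs : ∀ j ∉ s, x j = 0) :
    BddAbove (Set.range fun n => tnorm n x) := by
  refine ⟨∑ j ∈ s, |x j|, ?_⟩
  rintro _ ⟨n, rfl⟩
  exact tnorm_le_l1 n s x hs

lemma tnorm_tendsto {s : Finset ℕ} {x : ℕ → ℝ} (hs : ∀ j ∉ s, x j = 0) :
    Tendsto (fun n => tnorm n x) atTop (𝓝 (TNorm x)) :=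
  tendsto_atTop_ciSup (tnorm_mono x) (tnorm_bddAbove hs)

lemma TNorm_le_l1 {s : Finset ℕ} {x : ℕ → ℝ} (hs : ∀ j ∉ s, x j = 0) :
    TNorm x ≤ ∑ j ∈ s, |x j| :=
  ciSup_le fun n => tnorm_le_l1 n s x hs

lemma tnorm_le_TNorm {s : Finset ℕ} {x : ℕ → ℝ} (hs : ∀ j ∉ s, x j = 0) (n : ℕ) :
    tnorm n x ≤ TNorm x :=
  le_ciSup (tnorm_bddAbove hs) n

/-- The Tsirelson norm `‖x‖ = lim_n ‖x‖_n` satisfies the implicit equation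
`‖x‖ = max (‖x‖_∞) (sup { (1/2) ∑ᵢ ‖Eᵢ x‖ : (Eᵢ) admissible })` on `c₀₀`. -/
theorem tsirelson_norm_implicit_equation :
    (∀ x : ℕ →₀ ℝ, Tendsto (fun n => tnorm n ⇑x) atTop (𝓝 (TNorm ⇑x))) ∧
    ∀ x : ℕ →₀ ℝ,
      TNorm ⇑x = max (⨆ k, |x k|)
        (sSup {r | ∃ (k : ℕ) (E : ℕ → Finset ℕ), Admissible E k ∧
          r = (1 / 2) * ∑ i ∈ Finset.range k, TNorm (restr (E i) ⇑x)}) := by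
  have hsupp : ∀ x : ℕ →₀ ℝ, ∀ j ∉ x.support, (⇑x) j = 0 := fun x j hj =>
    Finsupp.notMem_support_iff.mp hj
  have hsupp_restr : ∀ (x : ℕ → ℝ) (F : Finset ℕ), ∀ j ∉ F, restr F x j = 0 := by
    intro x F j hj; simp [restr, hj]
  constructor
  · intro x
    exact tnorm_tendsto (hsupp x)
  · intro x
    set Sinf := {r | ∃ (k : ℕ) (E : ℕ → Finset ℕ), Admissible E k ∧
      r = (1 / 2) * ∑ i ∈ Finset.range k, TNorm (restr (E i) ⇑x)} with hSinf
    have hTNorm_l1 : ∀ (t : Finset ℕ) (y : ℕ → ℝ), (∀ j ∉ t, y j = 0) →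
        TNorm y ≤ ∑ j ∈ t, |y j| := fun t y ht => TNorm_le_l1 ht
    have hbddSinf : BddAbove Sinf := by
      refine ⟨∑ j ∈ x.support, |x j|, ?_⟩
      rintro r ⟨k, E, hadm, rfl⟩
      exact half_sum_le (hsupp x) TNorm hTNorm_l1 hadm
    have hSinfne : Sinf.Nonempty := ⟨0, zero_mem_sset (fun F => TNorm (restr F ⇑x))⟩
    refine le_antisymm ?_ ?_
    · -- TNorm ≤ max
      refine ciSup_le fun n => ?_
      induction n with
      | zero => exact le_max_left _ _
      | succ n ihn =>
        rw [tnorm_succ]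
        refine max_le ihn (le_trans (csSup_le ⟨0, zero_mem_sset (fun F => tnorm n (restr F ⇑x))⟩ ?_) (le_max_right _ _))
        rintro r ⟨k, E, hadm, rfl⟩
        have hstep : (1 / 2) * ∑ i ∈ Finset.range k, tnorm n (restr (E i) ⇑x) ≤
            (1 / 2) * ∑ i ∈ Finset.range k, TNorm (restr (E i) ⇑x) := by
          refine mul_le_mul_of_nonneg_left (Finset.sum_le_sum fun i _ => ?_) (by norm_num)
          exact tnorm_le_TNorm (hsupp_restr ⇑x (E i)) n
        exact hstep.trans (le_csSup hbddSinf ⟨k, E, hadm, rfl⟩)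
    · -- max ≤ TNorm
      refine max_le ?_ ?_
      · exact le_ciSup (tnorm_bddAbove (hsupp x)) 0
      · refine csSup_le hSinfne ?_
        rintro r ⟨k, E, hadm, rfl⟩
        have htend : Tendsto
            (fun m => (1 / 2 : ℝ) * ∑ i ∈ Finset.range k, tnorm m (restr (E i) ⇑x)) atTop
            (𝓝 ((1 / 2) * ∑ i ∈ Finset.range k, TNorm (restr (E i) ⇑x))) := by
          refine Tendsto.const_mul _ ?_
          exact tendsto_finset_sum _ fun i _ => tnorm_tendsto (hsupp_restr ⇑x (E i))
        refine le_of_tendsto htend (Eventually.of_forall fun m => ?_)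
        have hmem : (1 / 2 : ℝ) * ∑ i ∈ Finset.range k, tnorm m (restr (E i) ⇑x) ∈
            {r | ∃ (k : ℕ) (E : ℕ → Finset ℕ), Admissible E k ∧
              r = (1 / 2) * ∑ i ∈ Finset.range k, tnorm m (restr (E i) ⇑x)} :=
          ⟨k, E, hadm, rfl⟩
        have hbddSm : BddAbove {r | ∃ (k : ℕ) (E : ℕ → Finset ℕ), Admissible E k ∧
            r = (1 / 2) * ∑ i ∈ Finset.range k, tnorm m (restr (E i) ⇑x)} := by
          refine ⟨∑ j ∈ x.support, |x j|, ?_⟩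
          rintro r ⟨k', E', hadm', rfl⟩
          exact half_sum_le (hsupp x) (tnorm m) (fun t y ht => tnorm_le_l1 m t y ht) hadm'
        calc (1 / 2 : ℝ) * ∑ i ∈ Finset.range k, tnorm m (restr (E i) ⇑x)
            ≤ sSup {r | ∃ (k : ℕ) (E : ℕ → Finset ℕ), Admissible E k ∧
              r = (1 / 2) * ∑ i ∈ Finset.range k, tnorm m (restr (E i) ⇑x)} :=
              le_csSup hbddSm hmem
          _ ≤ tnorm (m + 1) ⇑x := by rw [tnorm_succ]; exact le_max_right _ _
          _ ≤ TNorm ⇑x := tnorm_le_TNorm (hsupp x) (m + 1)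
end

section
/- Let X be a compact Hausdorff space and F ⊆ C(X) a uniformly bounded set such that for all sequences (f_n) ⊆ F and all sequences (x_m) ⊆ X, lim_n lim_m f_n(x_m) = lim_m lim_n f_n(x_m) whenever both iterated limits exist. Then the pointwise limit of any pointwise convergent sequence from F is continuous. -/
open Filter Topology

/-- Grothendieck double-limit step: if a uniformly bounded family of continuous
functions on a compact Hausdorff space satisfies the double limit condition,
then pointwise limits of sequences from the family are continuous. -/
theorem continuous_pointwise_limit_of_double_limit {X : Type*}
    [TopologicalSpace X] [CompactSpace X] [T2Space X]
    (F : Set (X → ℝ)) (C : ℝ)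
    (hcont : ∀ f ∈ F, Continuous f)
    (hbd : ∀ f ∈ F, ∀ x, |f x| ≤ C)
    (hdl : ∀ (f : ℕ → X → ℝ), (∀ n, f n ∈ F) → ∀ (x : ℕ → X)
      (c d : ℕ → ℝ) (u v : ℝ),
      (∀ n, Tendsto (fun m => f n (x m)) atTop (𝓝 (c n))) →
      Tendsto c atTop (𝓝 u) →
      (∀ m, Tendsto (fun n => f n (x m)) atTop (𝓝 (d m))) →
      Tendsto d atTop (𝓝 v) → u = v) :
    ∀ g : ℕ → X → ℝ, (∀ n, g n ∈ F) →
      ∀ h : X → ℝ, (∀ x, Tendsto (fun n => g n x) atTop (𝓝 (h x))) →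
        Continuous h := by
  intro g hg h hlim
  have hbound : ∀ x, |h x| ≤ C := by
    intro x
    have : Tendsto (fun n => |g n x|) atTop (𝓝 |h x|) := (hlim x).abs
    exact le_of_tendsto this (Eventually.of_forall fun n => hbd _ (hg n) x)
  by_contra hc
  rw [continuous_iff_continuousAt] at hc
  push_neg at hc
  obtain ⟨x₀, hx₀⟩ := hc
  rw [ContinuousAt, Metric.tendsto_nhds] at hx₀
  push_neg at hx₀
  obtain ⟨ε, hε, hfreq⟩ := hx₀
  -- choose points xₘ near x₀ with big oscillation of h
  have hx : ∀ m : ℕ, ∃ x : X,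
      (∀ i ≤ m, dist (g i x) (g i x₀) < 1 / (m + 1)) ∧ ε ≤ dist (h x) (h x₀) := by
    intro m
    have hδ : (0 : ℝ) < 1 / (m + 1) := by positivity
    have hV : ∀ᶠ x in 𝓝 x₀, ∀ i ∈ Set.Iic m, dist (g i x) (g i x₀) < 1 / (m + 1) := by
      rw [eventually_all_finite (Set.finite_Iic m)]
      intro i _
      have := ((hcont _ (hg i)).tendsto x₀)
      rw [Metric.tendsto_nhds] at this
      exact this _ hδ
    obtain ⟨x, hx1, hx2⟩ := (hfreq.and_eventually hV).exists
    exact ⟨x, fun i hi => hx2 i hi, hx1⟩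
  choose xs hxs1 hxs2 using hx
  -- Bolzano–Weierstrass on (h (xs m))
  have hmem : ∀ m, h (xs m) ∈ Set.Icc (-C) C := fun m => abs_le.1 (hbound (xs m))
  obtain ⟨v, -, φ, hφ, hφlim⟩ :=
    tendsto_subseq_of_bounded (Metric.isBounded_Icc (-C) C) hmem
  -- first iterated limit: for fixed k, g k (xs m) → g k x₀
  have h1 : ∀ k, Tendsto (fun m => g k (xs m)) atTop (𝓝 (g k x₀)) := by
    intro k
    rw [Metric.tendsto_atTop]
    intro δ hδ
    obtain ⟨N, hN⟩ := exists_nat_one_div_lt hδ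
    refine ⟨max k N, fun m hm => ?_⟩
    have hk : k ≤ m := le_trans (le_max_left _ _) hm
    have hNm : N ≤ m := le_trans (le_max_right _ _) hm
    calc dist (g k (xs m)) (g k x₀) < 1 / (m + 1) := hxs1 m k hk
      _ ≤ 1 / (N + 1) := by
          apply one_div_le_one_div_of_le (by positivity)
          exact_mod_cast Nat.succ_le_succ hNm
      _ < δ := hN
  have h1' : ∀ k, Tendsto (fun j => g k (xs (φ j))) atTop (𝓝 (g k x₀)) :=
    fun k => (h1 k).comp hφ.tendsto_atTop
  have key : h x₀ = v :=
    hdl g hg (fun j => xs (φ j)) (fun k => g k x₀) (fun j => h (xs (φ j)))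
      (h x₀) v h1' (hlim x₀) (fun j => hlim (xs (φ j))) hφlim
  -- but dist v (h x₀) ≥ ε while v = h x₀
  have : ε ≤ dist v (h x₀) := by
    have : Tendsto (fun j => dist (h (xs (φ j))) (h x₀)) atTop (𝓝 (dist v (h x₀))) :=
      hφlim.dist tendsto_const_nhds
    exact ge_of_tendsto this (Eventually.of_forall fun j => hxs2 (φ j))
  rw [← key, dist_self] at this
  linarith
end
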